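/- Under the string equations (V'(Q))_{00} = 0 and (V'(Q))_{10} = 1/γ_1, the difference-quotient matrix W(x) = (V'(Q)-V'(x))/(Q-x) satisfies the identity W_{00}(x) = γ_1^2 W_{11}(x) W_{00}(x) - γ_1 W_{10}(x)(V'(x) + γ_1 W_{10}(x)). -/

import Mathlib

/-- Entry of the `K`-th power of a banded (tridiagonal) semi-infinite matrix. -/
noncomputable def matPow (Q : ℕ → ℕ → ℂ) : ℕ → ℕ → ℕ → ℂ
  | 0 => fun n m => if n = m then 1 else 0
  | K + 1 => fun n m => ∑ k ∈ Finset.range (n + K + 2), matPow Q K n k * Q k m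

/-- Entry of the matrix-valued difference quotient
`W(x) = (V'(Q) - V'(x))/(Q - x) = ∑_{K=2}^{d+1} u_K ∑_{j=0}^{K-2} x^j Q^{K-2-j}`. -/
noncomputable def Wmat (d : ℕ) (u : ℕ → ℂ) (Q : ℕ → ℕ → ℂ) (x : ℂ) (n m : ℕ) : ℂ :=
  ∑ K ∈ Finset.Icc 2 (d + 1), u K *
    ∑ j ∈ Finset.range (K - 1), x ^ j * matPow Q (K - 2 - j) n m

set_option linter.unusedSectionVars false

section helpers
variable (Q : ℕ → ℕ → ℂ) (htri : ∀ n m : ℕ, 1 < ((n : ℤ) - m).natAbs → Q n m = 0)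
include htri

lemma matPow_band : ∀ K n m : ℕ, K < ((n : ℤ) - m).natAbs → matPow Q K n m = 0 := by
  intro K
  induction K with
  | zero =>
    intro n m h
    have : n ≠ m := by omega
    simp [matPow, this]
  | succ K ih =>
    intro n m h
    rw [matPow]
    apply Finset.sum_eq_zero
    intro k _
    by_cases hk : K < ((n : ℤ) - k).natAbs
    · rw [ih n k hk, zero_mul]
    · have htr : ((n : ℤ) - m).natAbs ≤ ((n : ℤ) - k).natAbs + ((k : ℤ) - m).natAbs := by
        have : (n : ℤ) - m = ((n : ℤ) - k) + ((k : ℤ) - m) := by ring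
        rw [this]; exact Int.natAbs_add_le _ _
      have : 1 < ((k : ℤ) - m).natAbs := by omega
      rw [htri k m this, mul_zero]

lemma matPow_mul_ext (K n m N : ℕ) (hN : n + K + 2 ≤ N) :
    ∑ k ∈ Finset.range N, matPow Q K n k * Q k m = matPow Q (K + 1) n m := by
  rw [matPow]
  refine (Finset.sum_subset (Finset.range_subset_range.2 hN) ?_).symm
  intro k hk hk'
  have hk2 : n + K + 2 ≤ k := by simpa using hk'
  have : K < ((n : ℤ) - k).natAbs := by omega
  rw [matPow_band Q htri K n k this, zero_mul]

lemma matPow_one (n m : ℕ) : matPow Q 1 n m = Q n m := by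
  show (∑ k ∈ Finset.range (n + 0 + 2), matPow Q 0 n k * Q k m) = Q n m
  rw [Finset.sum_eq_single n]
  · simp [matPow]
  · intro k _ hkn; simp [matPow, Ne.symm hkn]
  · intro h; exact absurd (by simp : n ∈ Finset.range (n + 0 + 2)) h

lemma matPow_comm :
    ∀ (K n m N : ℕ), n + 2 ≤ N →
      ∑ k ∈ Finset.range N, Q n k * matPow Q K k m = matPow Q (K + 1) n m := by
  intro K
  induction K with
  | zero =>
    intro n m N hN
    rw [matPow_one Q htri]
    by_cases hm : m < N
    · rw [Finset.sum_eq_single m]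
      · simp [matPow]
      · intro k _ hkm; simp [matPow, hkm]
      · intro h; exact absurd (Finset.mem_range.2 hm) h
    · rw [htri n m (by omega)]
      apply Finset.sum_eq_zero
      intro k hk
      have : k ≠ m := by have := Finset.mem_range.1 hk; omega
      simp [matPow, this]
  | succ K ih =>
    intro n m N hN
    have step : ∀ k ∈ Finset.range N,
        Q n k * matPow Q (K + 1) k m
          = ∑ l ∈ Finset.range (N + K + 1), Q n k * matPow Q K k l * Q l m := by
      intro k hk
      have hk' : k < N := Finset.mem_range.1 hk
      have hext : ∑ l ∈ Finset.range (k + K + 2), Q n k * (matPow Q K k l * Q l m)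
          = ∑ l ∈ Finset.range (N + K + 1), Q n k * (matPow Q K k l * Q l m) := by
        apply Finset.sum_subset (Finset.range_subset_range.2 (by omega : k + K + 2 ≤ N + K + 1))
        intro l _ hl
        rw [matPow_band Q htri K k l (by
          have : k + K + 2 ≤ l := by simpa using hl
          omega)]
        ring
      rw [matPow, Finset.mul_sum, hext]
      exact Finset.sum_congr rfl fun l _ => (mul_assoc _ _ _).symm
    rw [Finset.sum_congr rfl step, Finset.sum_comm]
    have : ∀ l ∈ Finset.range (N + K + 1),
        ∑ k ∈ Finset.range N, Q n k * matPow Q K k l * Q l m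
          = matPow Q (K + 1) n l * Q l m := by
      intro l _
      rw [← Finset.sum_mul]
      congr 1
      exact ih n l N hN
    rw [Finset.sum_congr rfl this]
    exact matPow_mul_ext Q htri (K + 1) n m (N + K + 1) (by omega)

lemma matPow_symm (hsymm : ∀ n m, Q n m = Q m n) :
    ∀ K n m, matPow Q K n m = matPow Q K m n := by
  intro K
  induction K with
  | zero => intro n m; simp [matPow, eq_comm]
  | succ K ih =>
    intro n m
    set N := max (m + K + 2) (n + 2) with hNdef
    have h1 : matPow Q (K + 1) m n
        = ∑ k ∈ Finset.range (m + K + 2), Q n k * matPow Q K k m := by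
      rw [matPow]
      exact Finset.sum_congr rfl fun k _ => by rw [ih m k, hsymm k n, mul_comm]
    have hext : ∑ k ∈ Finset.range (m + K + 2), Q n k * matPow Q K k m
        = ∑ k ∈ Finset.range N, Q n k * matPow Q K k m := by
      apply Finset.sum_subset (Finset.range_subset_range.2 (le_max_left _ _))
      intro k _ hk
      rw [matPow_band Q htri K k m (by
        have : m + K + 2 ≤ k := by simpa using hk
        omega)]
      ring
    rw [h1, hext]
    exact (matPow_comm Q htri K n m N (le_max_right _ _)).symm
lemma matPow_col0 (A n : ℕ) :
    matPow Q (A + 1) n 0 = matPow Q A n 0 * Q 0 0 + matPow Q A n 1 * Q 1 0 := by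
  rw [matPow]
  show (∑ k ∈ Finset.range (n + A + 2), matPow Q A n k * Q k 0) = _
  have hext : ∑ k ∈ Finset.range 2, matPow Q A n k * Q k 0
      = ∑ k ∈ Finset.range (n + A + 2), matPow Q A n k * Q k 0 := by
    apply Finset.sum_subset (Finset.range_subset_range.2 (by omega))
    intro k _ hk
    rw [htri k 0 (by
      have : 2 ≤ k := by simp at hk; omega
      omega)]
    ring
  rw [← hext, Finset.sum_range_succ, Finset.sum_range_one]

end helpers

lemma tele (x : ℂ) (M : ℕ → ℂ) (L : ℕ) :
    (∑ j ∈ Finset.range (L + 1), x ^ j * M (L + 1 - j))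
      - x * ∑ j ∈ Finset.range (L + 1), x ^ j * M (L - j)
    = M (L + 1) - x ^ (L + 1) * M 0 := by
  rw [Finset.sum_range_succ' (fun j => x ^ j * M (L + 1 - j)) L,
      Finset.sum_range_succ (fun j => x ^ j * M (L - j)) L,
      mul_add, Finset.mul_sum]
  have h1 : ∀ j ∈ Finset.range L,
      x ^ (j + 1) * M (L + 1 - (j + 1)) = x * (x ^ j * M (L - j)) := by
    intro j _
    rw [Nat.succ_sub_succ]
    ring
  rw [Finset.sum_congr rfl h1]
  simp only [Nat.sub_zero, Nat.sub_self, pow_zero, one_mul]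
  ring

theorem stmt19 (d : ℕ) (u : ℕ → ℂ) (Q : ℕ → ℕ → ℂ)
    (htri : ∀ n m : ℕ, 1 < ((n : ℤ) - m).natAbs → Q n m = 0)
    (hsymm : ∀ n m, Q n m = Q m n)
    (hγ : Q 1 0 ≠ 0)
    (hstring1 : (∑ K ∈ Finset.Icc 1 (d + 1), u K * matPow Q (K - 1) 0 0) = 0)
    (hstring2 : (∑ K ∈ Finset.Icc 1 (d + 1), u K * matPow Q (K - 1) 1 0)
      = 1 / Q 1 0) :
    ∀ x : ℂ,
      Wmat d u Q x 0 0 =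
        Q 1 0 ^ 2 * Wmat d u Q x 1 1 * Wmat d u Q x 0 0
          - Q 1 0 * Wmat d u Q x 1 0 *
            ((∑ K ∈ Finset.Icc 1 (d + 1), u K * x ^ (K - 1))
              + Q 1 0 * Wmat d u Q x 1 0) := by
  intro x
  have key : ∀ n : ℕ,
      Wmat d u Q x n 0 * Q 0 0 + Wmat d u Q x n 1 * Q 1 0 - x * Wmat d u Q x n 0
        = (∑ K ∈ Finset.Icc 2 (d + 1), u K * matPow Q (K - 1) n 0)
          - ∑ K ∈ Finset.Icc 2 (d + 1), u K * (x ^ (K - 1) * matPow Q 0 n 0) := by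
    intro n
    unfold Wmat
    rw [Finset.sum_mul, Finset.sum_mul, Finset.mul_sum, ← Finset.sum_sub_distrib,
      ← Finset.sum_add_distrib, ← Finset.sum_sub_distrib]
    apply Finset.sum_congr rfl
    intro K hK
    have hK2 : 2 ≤ K := (Finset.mem_Icc.1 hK).1
    obtain ⟨L, rfl⟩ := Nat.exists_eq_add_of_le hK2
    have e1 : 2 + L - 1 = L + 1 := by omega
    have e2 : ∀ j : ℕ, 2 + L - 2 - j = L - j := fun j => by omega
    simp only [e1, e2]
    have hcomb : (∑ j ∈ Finset.range (L + 1), x ^ j * matPow Q (L - j) n 0) * Q 0 0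
        + (∑ j ∈ Finset.range (L + 1), x ^ j * matPow Q (L - j) n 1) * Q 1 0
        = ∑ j ∈ Finset.range (L + 1), x ^ j * matPow Q (L + 1 - j) n 0 := by
      rw [Finset.sum_mul, Finset.sum_mul, ← Finset.sum_add_distrib]
      apply Finset.sum_congr rfl
      intro j hj
      have hj' : j ≤ L := by
        have := Finset.mem_range.1 hj; omega
      have : L + 1 - j = (L - j) + 1 := by omega
      rw [this, matPow_col0 Q htri (L - j) n]
      ring
    have htel := tele x (fun A => matPow Q A n 0) L
    calc u (2 + L) * (∑ j ∈ Finset.range (L + 1), x ^ j * matPow Q (L - j) n 0) * Q 0 0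
          + u (2 + L) * (∑ j ∈ Finset.range (L + 1), x ^ j * matPow Q (L - j) n 1) * Q 1 0
          - x * (u (2 + L) * ∑ j ∈ Finset.range (L + 1), x ^ j * matPow Q (L - j) n 0)
        = u (2 + L) * (((∑ j ∈ Finset.range (L + 1), x ^ j * matPow Q (L - j) n 0) * Q 0 0
            + (∑ j ∈ Finset.range (L + 1), x ^ j * matPow Q (L - j) n 1) * Q 1 0)
            - x * ∑ j ∈ Finset.range (L + 1), x ^ j * matPow Q (L - j) n 0) := by ring
      _ = u (2 + L) * (matPow Q (L + 1) n 0 - x ^ (L + 1) * matPow Q 0 n 0) := by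
            rw [hcomb, htel]
      _ = u (2 + L) * matPow Q (L + 1) n 0
            - u (2 + L) * (x ^ (L + 1) * matPow Q 0 n 0) := by ring
  have hins : Finset.Icc 1 (d + 1) = insert 1 (Finset.Icc 2 (d + 1)) := by
    ext k
    simp only [Finset.mem_Icc, Finset.mem_insert]
    omega
  have hnot : (1 : ℕ) ∉ Finset.Icc 2 (d + 1) := by simp
  have hP000 : matPow Q 0 0 0 = 1 := by simp [matPow]
  have hP010 : matPow Q 0 1 0 = 0 := by simp [matPow]
  -- Equation E1 (row 0)
  have hs1 : (∑ K ∈ Finset.Icc 2 (d + 1), u K * matPow Q (K - 1) 0 0) = -(u 1) := by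
    rw [hins, Finset.sum_insert hnot] at hstring1
    simp only [Nat.sub_self, hP000, mul_one] at hstring1
    linear_combination hstring1
  have hs2 : (∑ K ∈ Finset.Icc 2 (d + 1), u K * matPow Q (K - 1) 1 0) = 1 / Q 1 0 := by
    rw [hins, Finset.sum_insert hnot] at hstring2
    simpa [hP010] using hstring2
  have hVx : (∑ K ∈ Finset.Icc 1 (d + 1), u K * x ^ (K - 1))
      = u 1 + ∑ K ∈ Finset.Icc 2 (d + 1), u K * (x ^ (K - 1) * matPow Q 0 0 0) := by
    rw [hins, Finset.sum_insert hnot]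
    simp [hP000]
  have hWsym : Wmat d u Q x 0 1 = Wmat d u Q x 1 0 := by
    unfold Wmat
    refine Finset.sum_congr rfl fun K _ => ?_
    congr 1
    exact Finset.sum_congr rfl fun j _ => by
      rw [matPow_symm Q htri hsymm]
  have E1 : Wmat d u Q x 0 0 * Q 0 0 + Wmat d u Q x 1 0 * Q 1 0 - x * Wmat d u Q x 0 0
      = -(∑ K ∈ Finset.Icc 1 (d + 1), u K * x ^ (K - 1)) := by
    rw [← hWsym, key 0, hs1, hVx]
    ring
  have E2 : Wmat d u Q x 1 0 * Q 0 0 + Wmat d u Q x 1 1 * Q 1 0 - x * Wmat d u Q x 1 0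
      = 1 / Q 1 0 := by
    rw [key 1, hs2]
    simp [hP010]
  have E2' : (Wmat d u Q x 1 0 * Q 0 0 + Wmat d u Q x 1 1 * Q 1 0
      - x * Wmat d u Q x 1 0) * Q 1 0 = 1 := by
    rw [E2, one_div, inv_mul_cancel₀ hγ]
  linear_combination Q 1 0 * Wmat d u Q x 1 0 * E1 - Wmat d u Q x 0 0 * E2'
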